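/- arXiv:1911.10972 — 2 statements merged into one kernel-verified Lean document; each statement's English description precedes it below -/
import Mathlib

section
/- Let T > 0, σ > 0, and let a, b, M be real numbers with M > a and M > b. Then the conditional density of the location of the maximum integrates to one: ∫₀^T (1/(√(2π)·σ)) · ((M-a)(M-b)/(2M-a-b)) · (T/(θ(T-θ)))^{3/2} · exp( (1/σ²)·( (b-a)²/(2T) + 2(M-a)(M-b)/T − (M-a)²/(2θ) − (M-b)²/(2(T-θ)) ) ) dθ = 1. -/
open Real MeasureTheory Filter Set intervalIntegral

noncomputable def bbPhi : ℝ → ℝ := fun x => ∫ t in (0:ℝ)..x, Real.exp (-t ^ 2 / 2)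

lemma bbgauss_cont : Continuous fun t : ℝ => Real.exp (-t ^ 2 / 2) := by fun_prop

lemma bbgauss_eq : (fun t : ℝ => Real.exp (-t ^ 2 / 2)) = fun t : ℝ => Real.exp (-(1/2) * t ^ 2) := by
  funext t; congr 1; ring

lemma bbgauss_integrable : Integrable fun t : ℝ => Real.exp (-t ^ 2 / 2) := by
  rw [bbgauss_eq]; exact integrable_exp_neg_mul_sq (by norm_num)

lemma bbgauss_Ioi : ∫ t in Ioi (0:ℝ), Real.exp (-t ^ 2 / 2) = Real.sqrt (2 * π) / 2 := by
  rw [bbgauss_eq]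
  rw [integral_gaussian_Ioi, show π / (1/2:ℝ) = 2 * π by ring]

lemma bbgauss_Iic : ∫ t in Iic (0:ℝ), Real.exp (-t ^ 2 / 2) = Real.sqrt (2 * π) / 2 := by
  have h := integral_comp_neg_Ioi (c := 0) (f := fun t : ℝ => Real.exp (-t ^ 2 / 2))
  simp only [neg_zero] at h
  rw [← h, ← bbgauss_Ioi]
  congr 1; funext t; congr 1; ring

lemma bbPhi_hasDerivAt (x : ℝ) : HasDerivAt bbPhi (Real.exp (-x ^ 2 / 2)) x :=
  bbgauss_cont.integral_hasStrictDerivAt 0 x |>.hasDerivAt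

lemma bbPhi_tendsto_atTop : Tendsto bbPhi atTop (nhds (Real.sqrt (2 * π) / 2)) := by
  rw [← bbgauss_Ioi]
  exact intervalIntegral_tendsto_integral_Ioi 0 bbgauss_integrable.integrableOn tendsto_id

lemma bbPhi_tendsto_atBot : Tendsto bbPhi atBot (nhds (-(Real.sqrt (2 * π) / 2))) := by
  have h : Tendsto (fun x : ℝ => ∫ t in x..(0:ℝ), Real.exp (-t ^ 2 / 2)) atBot
      (nhds (∫ t in Iic (0:ℝ), Real.exp (-t ^ 2 / 2))) :=
    intervalIntegral_tendsto_integral_Iic 0 bbgauss_integrable.integrableOn tendsto_id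
  rw [bbgauss_Iic] at h
  have heq : bbPhi = fun x : ℝ => -∫ t in x..(0:ℝ), Real.exp (-t ^ 2 / 2) := by
    funext x; rw [bbPhi, intervalIntegral.integral_symm]
  rw [heq]
  exact h.neg
theorem bb_deriv (T α β : ℝ) (hT : 0 < T) (hα : 0 < α) (hβ : 0 < β) (θ : ℝ)
    (hθ0 : 0 < θ) (hθT : θ < T) :
    HasDerivAt (fun x : ℝ =>
        (1 / Real.sqrt (2 * π)) *
          bbPhi (-((α * (T - x) - β * x) / Real.sqrt (T * x * (T - x)))) +
        ((β - α) / ((α + β) * Real.sqrt (2 * π)) * Real.exp (2 * α * β / T)) *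
          bbPhi (-((α * (T - x) + β * x) / Real.sqrt (T * x * (T - x)))))
      (α * β / (Real.sqrt (2 * π) * (α + β)) * (T / (θ * (T - θ))) ^ ((3:ℝ)/2) *
        Real.exp ((α + β) ^ 2 / (2 * T) - α ^ 2 / (2 * θ) - β ^ 2 / (2 * (T - θ)))) θ := by
  have hsπ : 0 < Real.sqrt (2 * π) := Real.sqrt_pos.mpr (by positivity)
  have hTθ : 0 < T - θ := by linarith
  have hP : (0:ℝ) < T * θ * (T - θ) := by positivity
  have hS0 : 0 < Real.sqrt (T * θ * (T - θ)) := Real.sqrt_pos.mpr hP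
  have hS2 : Real.sqrt (T * θ * (T - θ)) ^ 2 = T * θ * (T - θ) := Real.sq_sqrt hP.le
  have hw : (0:ℝ) < T / (θ * (T - θ)) := by positivity
  have hR : (T / (θ * (T - θ))) ^ ((3:ℝ)/2)
      = (T / (θ * (T - θ))) * (T / Real.sqrt (T * θ * (T - θ))) := by
    rw [show (3:ℝ)/2 = 1 + 1/2 by norm_num, Real.rpow_add hw, Real.rpow_one,
      ← Real.sqrt_eq_rpow,
      show T / (θ * (T - θ)) = T ^ 2 / (T * θ * (T - θ)) by field_simp,
      Real.sqrt_div (sq_nonneg T), Real.sqrt_sq hT.le]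
  have hPd : HasDerivAt (fun x : ℝ => T * x * (T - x)) (T * (T - 2 * θ)) θ := by
    have h := ((hasDerivAt_id θ).const_mul T).mul ((hasDerivAt_const θ T).sub (hasDerivAt_id θ))
    refine h.congr_deriv (Eq.symm ?_) <;> simp [id_eq] <;> ring
  have hSd : HasDerivAt (fun x : ℝ => Real.sqrt (T * x * (T - x)))
      (T * (T - 2 * θ) / (2 * Real.sqrt (T * θ * (T - θ)))) θ := hPd.sqrt hP.ne'
  have hNud : HasDerivAt (fun x : ℝ => α * (T - x) - β * x) (-α - β) θ := by
    have h := (((hasDerivAt_const θ T).sub (hasDerivAt_id θ)).const_mul α).sub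
      ((hasDerivAt_id θ).const_mul β)
    refine h.congr_deriv (Eq.symm ?_) <;> simp [id_eq] <;> ring
  have hNvd : HasDerivAt (fun x : ℝ => α * (T - x) + β * x) (-α + β) θ := by
    have h := (((hasDerivAt_const θ T).sub (hasDerivAt_id θ)).const_mul α).add
      ((hasDerivAt_id θ).const_mul β)
    refine h.congr_deriv (Eq.symm ?_) <;> simp [id_eq] <;> ring
  have hud : HasDerivAt (fun x : ℝ => (α * (T - x) - β * x) / Real.sqrt (T * x * (T - x)))
      (-((α * (T - θ) + β * θ) * ((T / (θ * (T - θ))) ^ ((3:ℝ)/2)) / (2 * T))) θ := by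
    have h := hNud.div hSd hS0.ne'
    refine h.congr_deriv (Eq.symm ?_)
    rw [hR]
    obtain ⟨s, hs⟩ : ∃ s, Real.sqrt (T * θ * (T - θ)) = s := ⟨_, rfl⟩
    have hs2 : s ^ 2 = T * θ * (T - θ) := by rw [← hs]; exact hS2
    have hsp : 0 < s := hs ▸ hS0
    rw [hs]
    field_simp
    linear_combination (-T*(α*(T-θ)+θ*β) + 2*θ*(T-θ)*(α+β)) * hs2
  have hvd : HasDerivAt (fun x : ℝ => (α * (T - x) + β * x) / Real.sqrt (T * x * (T - x)))
      (-((α * (T - θ) - β * θ) * ((T / (θ * (T - θ))) ^ ((3:ℝ)/2)) / (2 * T))) θ := by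
    have h := hNvd.div hSd hS0.ne'
    refine h.congr_deriv (Eq.symm ?_)
    rw [hR]
    obtain ⟨s, hs⟩ : ∃ s, Real.sqrt (T * θ * (T - θ)) = s := ⟨_, rfl⟩
    have hs2 : s ^ 2 = T * θ * (T - θ) := by rw [← hs]; exact hS2
    have hsp : 0 < s := hs ▸ hS0
    rw [hs]
    field_simp
    linear_combination (-T*(α*(T-θ)-θ*β) - 2*θ*(T-θ)*(-α+β)) * hs2
  have hue : -((α * (T - θ) - β * θ) / Real.sqrt (T * θ * (T - θ))) ^ 2 / 2
      = (α + β) ^ 2 / (2 * T) - α ^ 2 / (2 * θ) - β ^ 2 / (2 * (T - θ)) := by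
    simp only [div_pow]
    rw [hS2]
    field_simp
    ring
  have hve : -((α * (T - θ) + β * θ) / Real.sqrt (T * θ * (T - θ))) ^ 2 / 2
      = ((α + β) ^ 2 / (2 * T) - α ^ 2 / (2 * θ) - β ^ 2 / (2 * (T - θ))) - 2 * α * β / T := by
    simp only [div_pow]
    rw [hS2]
    field_simp
    ring
  have hueexp : Real.exp (-((α * (T - θ) - β * θ) / Real.sqrt (T * θ * (T - θ))) ^ 2 / 2)
      = Real.exp ((α + β) ^ 2 / (2 * T) - α ^ 2 / (2 * θ) - β ^ 2 / (2 * (T - θ))) := by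
    rw [hue]
  have d1 := ((bbPhi_hasDerivAt
      (-((α * (T - θ) - β * θ) / Real.sqrt (T * θ * (T - θ))))).comp θ hud.neg).const_mul
      (1 / Real.sqrt (2 * π))
  have d2 := ((bbPhi_hasDerivAt
      (-((α * (T - θ) + β * θ) / Real.sqrt (T * θ * (T - θ))))).comp θ hvd.neg).const_mul
      ((β - α) / ((α + β) * Real.sqrt (2 * π)) * Real.exp (2 * α * β / T))
  have hFd' := d1.add d2
  refine hFd'.congr_deriv (Eq.symm ?_)
  simp only [Function.comp, neg_neg, neg_sq]
  have hveexp : Real.exp (-((α * (T - θ) + β * θ) / Real.sqrt (T * θ * (T - θ))) ^ 2 / 2)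
      = Real.exp ((α + β) ^ 2 / (2 * T) - α ^ 2 / (2 * θ) - β ^ 2 / (2 * (T - θ)))
        / Real.exp (2 * α * β / T) := by
    rw [hve, Real.exp_sub]
  rw [hueexp, hveexp]
  have hab : (0:ℝ) < α + β := by linarith
  obtain ⟨E, hE⟩ : ∃ E, Real.exp ((α + β) ^ 2 / (2 * T) - α ^ 2 / (2 * θ)
      - β ^ 2 / (2 * (T - θ))) = E := ⟨_, rfl⟩
  obtain ⟨G, hG⟩ : ∃ G, Real.exp (2 * α * β / T) = G := ⟨_, rfl⟩
  obtain ⟨R, hRg⟩ : ∃ R, (T / (θ * (T - θ))) ^ ((3:ℝ)/2) = R := ⟨_, rfl⟩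
  have hGpos : (0:ℝ) < G := hG ▸ Real.exp_pos _
  rw [hE, hG, hRg]
  field_simp
  ring

section
variable (T α β : ℝ)

-- limits of F at the endpoints
theorem bbF_tendsto_zero (hT : 0 < T) (hα : 0 < α) (hβ : 0 < β) :
    Tendsto (fun x : ℝ =>
        (1 / Real.sqrt (2 * π)) *
          bbPhi (-((α * (T - x) - β * x) / Real.sqrt (T * x * (T - x)))) +
        ((β - α) / ((α + β) * Real.sqrt (2 * π)) * Real.exp (2 * α * β / T)) *
          bbPhi (-((α * (T - x) + β * x) / Real.sqrt (T * x * (T - x)))))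
      (nhdsWithin 0 (Ioi 0))
      (nhds ((1 / Real.sqrt (2 * π)) * (-(Real.sqrt (2 * π) / 2)) +
        ((β - α) / ((α + β) * Real.sqrt (2 * π)) * Real.exp (2 * α * β / T)) *
          (-(Real.sqrt (2 * π) / 2)))) := by
  have hS : Tendsto (fun x : ℝ => Real.sqrt (T * x * (T - x))) (nhdsWithin 0 (Ioi 0))
      (nhdsWithin 0 (Ioi 0)) := by
    rw [tendsto_nhdsWithin_iff]
    constructor
    · have hc : Continuous fun x : ℝ => Real.sqrt (T * x * (T - x)) := by fun_prop
      have := hc.tendsto 0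
      simp only [mul_zero, zero_mul, Real.sqrt_zero] at this
      exact this.mono_left nhdsWithin_le_nhds
    · filter_upwards [Ioo_mem_nhdsGT_of_mem (show (0:ℝ) ∈ Ico 0 T from ⟨le_refl _, hT⟩)]
        with x hx
      obtain ⟨hx1, hx2⟩ := hx
      have hx3 : 0 < T - x := by linarith
      exact Real.sqrt_pos.mpr (by positivity)
  have hSinv : Tendsto (fun x : ℝ => (Real.sqrt (T * x * (T - x)))⁻¹)
      (nhdsWithin 0 (Ioi 0)) atTop := tendsto_inv_nhdsGT_zero.comp hS
  have hu : Tendsto (fun x : ℝ => (α * (T - x) - β * x) / Real.sqrt (T * x * (T - x)))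
      (nhdsWithin 0 (Ioi 0)) atTop := by
    simp only [div_eq_mul_inv]
    refine Tendsto.pos_mul_atTop (by positivity : (0:ℝ) < α * T) ?_ hSinv
    have hc : Continuous fun x : ℝ => α * (T - x) - β * x := by fun_prop
    have := hc.tendsto 0
    simp only [sub_zero, mul_zero, sub_zero] at this
    exact this.mono_left nhdsWithin_le_nhds
  have hv : Tendsto (fun x : ℝ => (α * (T - x) + β * x) / Real.sqrt (T * x * (T - x)))
      (nhdsWithin 0 (Ioi 0)) atTop := by
    simp only [div_eq_mul_inv]
    refine Tendsto.pos_mul_atTop (by positivity : (0:ℝ) < α * T) ?_ hSinv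
    have hc : Continuous fun x : ℝ => α * (T - x) + β * x := by fun_prop
    have := hc.tendsto 0
    simp only [add_zero, mul_zero, sub_zero] at this
    exact this.mono_left nhdsWithin_le_nhds
  have h1 : Tendsto (fun x : ℝ =>
      bbPhi (-((α * (T - x) - β * x) / Real.sqrt (T * x * (T - x)))))
      (nhdsWithin 0 (Ioi 0)) (nhds (-(Real.sqrt (2 * π) / 2))) :=
    bbPhi_tendsto_atBot.comp (tendsto_neg_atTop_atBot.comp hu)
  have h2 : Tendsto (fun x : ℝ =>
      bbPhi (-((α * (T - x) + β * x) / Real.sqrt (T * x * (T - x)))))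
      (nhdsWithin 0 (Ioi 0)) (nhds (-(Real.sqrt (2 * π) / 2))) :=
    bbPhi_tendsto_atBot.comp (tendsto_neg_atTop_atBot.comp hv)
  exact (h1.const_mul _).add (h2.const_mul _)

theorem bbF_tendsto_T (hT : 0 < T) (hα : 0 < α) (hβ : 0 < β) :
    Tendsto (fun x : ℝ =>
        (1 / Real.sqrt (2 * π)) *
          bbPhi (-((α * (T - x) - β * x) / Real.sqrt (T * x * (T - x)))) +
        ((β - α) / ((α + β) * Real.sqrt (2 * π)) * Real.exp (2 * α * β / T)) *
          bbPhi (-((α * (T - x) + β * x) / Real.sqrt (T * x * (T - x)))))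
      (nhdsWithin T (Iio T))
      (nhds ((1 / Real.sqrt (2 * π)) * (Real.sqrt (2 * π) / 2) +
        ((β - α) / ((α + β) * Real.sqrt (2 * π)) * Real.exp (2 * α * β / T)) *
          (-(Real.sqrt (2 * π) / 2)))) := by
  have hS : Tendsto (fun x : ℝ => Real.sqrt (T * x * (T - x))) (nhdsWithin T (Iio T))
      (nhdsWithin 0 (Ioi 0)) := by
    rw [tendsto_nhdsWithin_iff]
    constructor
    · have hc : Continuous fun x : ℝ => Real.sqrt (T * x * (T - x)) := by fun_prop
      have := hc.tendsto T
      simp only [sub_self, mul_zero, Real.sqrt_zero] at this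
      exact this.mono_left nhdsWithin_le_nhds
    · filter_upwards [Ioo_mem_nhdsLT_of_mem (show T ∈ Ioc (0:ℝ) T from ⟨hT, le_refl _⟩)]
        with x hx
      obtain ⟨hx1, hx2⟩ := hx
      have hx3 : 0 < T - x := by linarith
      exact Real.sqrt_pos.mpr (by positivity)
  have hSinv : Tendsto (fun x : ℝ => (Real.sqrt (T * x * (T - x)))⁻¹)
      (nhdsWithin T (Iio T)) atTop := tendsto_inv_nhdsGT_zero.comp hS
  have hu : Tendsto (fun x : ℝ => (α * (T - x) - β * x) / Real.sqrt (T * x * (T - x)))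
      (nhdsWithin T (Iio T)) atBot := by
    simp only [div_eq_mul_inv]
    refine Tendsto.neg_mul_atTop (show -(β * T) < 0 by nlinarith) ?_ hSinv
    have hc : Continuous fun x : ℝ => α * (T - x) - β * x := by fun_prop
    have := hc.tendsto T
    simp only [sub_self, mul_zero, zero_sub] at this
    exact this.mono_left nhdsWithin_le_nhds
  have hv : Tendsto (fun x : ℝ => (α * (T - x) + β * x) / Real.sqrt (T * x * (T - x)))
      (nhdsWithin T (Iio T)) atTop := by
    simp only [div_eq_mul_inv]
    refine Tendsto.pos_mul_atTop (by positivity : (0:ℝ) < β * T) ?_ hSinv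
    have hc : Continuous fun x : ℝ => α * (T - x) + β * x := by fun_prop
    have := hc.tendsto T
    simp only [sub_self, mul_zero, zero_add] at this
    exact this.mono_left nhdsWithin_le_nhds
  have h1 : Tendsto (fun x : ℝ =>
      bbPhi (-((α * (T - x) - β * x) / Real.sqrt (T * x * (T - x)))))
      (nhdsWithin T (Iio T)) (nhds (Real.sqrt (2 * π) / 2)) :=
    bbPhi_tendsto_atTop.comp (tendsto_neg_atBot_atTop.comp hu)
  have h2 : Tendsto (fun x : ℝ =>
      bbPhi (-((α * (T - x) + β * x) / Real.sqrt (T * x * (T - x)))))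
      (nhdsWithin T (Iio T)) (nhds (-(Real.sqrt (2 * π) / 2))) :=
    bbPhi_tendsto_atBot.comp (tendsto_neg_atTop_atBot.comp hv)
  exact (h1.const_mul _).add (h2.const_mul _)

end

theorem bb_key (T α β : ℝ) (hT : 0 < T) (hα : 0 < α) (hβ : 0 < β) :
    ∫ θ in (0:ℝ)..T, α * β / (Real.sqrt (2 * π) * (α + β)) * (T / (θ * (T - θ))) ^ ((3:ℝ)/2) *
      Real.exp ((α + β) ^ 2 / (2 * T) - α ^ 2 / (2 * θ) - β ^ 2 / (2 * (T - θ))) = 1 := by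
  have hsπ : 0 < Real.sqrt (2 * π) := Real.sqrt_pos.mpr (by positivity)
  set f : ℝ → ℝ := fun θ => α * β / (Real.sqrt (2 * π) * (α + β)) * (T / (θ * (T - θ))) ^ ((3:ℝ)/2) *
      Real.exp ((α + β) ^ 2 / (2 * T) - α ^ 2 / (2 * θ) - β ^ 2 / (2 * (T - θ))) with hf_def
  set F : ℝ → ℝ := fun x =>
      (1 / Real.sqrt (2 * π)) *
        bbPhi (-((α * (T - x) - β * x) / Real.sqrt (T * x * (T - x)))) +
      ((β - α) / ((α + β) * Real.sqrt (2 * π)) * Real.exp (2 * α * β / T)) *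
        bbPhi (-((α * (T - x) + β * x) / Real.sqrt (T * x * (T - x)))) with hF_def
  have hFd : ∀ θ ∈ Ioo (0:ℝ) T, HasDerivAt F (f θ) θ := fun θ hθ =>
    bb_deriv T α β hT hα hβ θ hθ.1 hθ.2
  -- nonnegativity and continuity of f on Ioo 0 T
  have hf_nonneg : ∀ x ∈ Ioo (0:ℝ) T, 0 ≤ f x := by
    intro x hx
    obtain ⟨hx1, hx2⟩ := hx
    have hx3 : 0 < T - x := by linarith
    rw [hf_def]
    have h1 : (0:ℝ) ≤ T / (x * (T - x)) := by positivity
    exact mul_nonneg (mul_nonneg (by positivity) (Real.rpow_nonneg h1 _)) (Real.exp_pos _).le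
  have hf_cont : ∀ x ∈ Ioo (0:ℝ) T, ContinuousAt f x := by
    intro x hx
    obtain ⟨hx1, hx2⟩ := hx
    have hx3 : 0 < T - x := by linarith
    rw [hf_def]
    refine ContinuousAt.mul (ContinuousAt.mul continuousAt_const ?_) ?_
    · refine ContinuousAt.rpow_const (continuousAt_const.div (by fun_prop) (by positivity)) ?_
      right; norm_num
    · refine Real.continuous_exp.continuousAt.comp ?_
      refine ContinuousAt.sub (ContinuousAt.sub continuousAt_const ?_) ?_
      · exact continuousAt_const.div (by fun_prop) (by positivity)
      · exact continuousAt_const.div (by fun_prop) (by positivity)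
  -- endpoint limits
  have hF0 := bbF_tendsto_zero T α β hT hα hβ
  have hFT := bbF_tendsto_T T α β hT hα hβ
  rw [← hF_def] at hF0 hFT
  -- the approximating sequences
  set a : ℕ → ℝ := fun n => T / ((n:ℝ) + 3) with ha_def
  set b : ℕ → ℝ := fun n => T - T / ((n:ℝ) + 3) with hb_def
  have h_an_pos : ∀ n : ℕ, 0 < a n := by
    intro n; rw [ha_def]; positivity
  have h_an_le : ∀ n : ℕ, T / ((n:ℝ) + 3) ≤ T / 3 := by
    intro n
    apply div_le_div_of_nonneg_left hT.le (by norm_num)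
    have : (0:ℝ) ≤ (n:ℝ) := Nat.cast_nonneg n
    linarith
  have h_ab : ∀ n : ℕ, a n < b n := by
    intro n
    have h1 := h_an_le n
    rw [ha_def, hb_def]
    dsimp only
    linarith
  have h_bn_lt : ∀ n : ℕ, b n < T := by
    intro n
    have := h_an_pos n
    rw [hb_def]; dsimp only
    rw [ha_def] at this; dsimp only at this
    linarith
  have h_sub : ∀ n : ℕ, Icc (a n) (b n) ⊆ Ioo (0:ℝ) T := by
    intro n x hx
    exact ⟨lt_of_lt_of_le (h_an_pos n) hx.1, lt_of_le_of_lt hx.2 (h_bn_lt n)⟩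
  have ha_tend : Tendsto a atTop (nhds 0) := by
    have h := (tendsto_const_div_atTop_nhds_zero_nat T).comp (tendsto_add_atTop_nat 3)
    refine h.congr fun n => ?_
    rw [ha_def]
    dsimp only [Function.comp]
    push_cast
    ring_nf
  have hb_tend : Tendsto b atTop (nhds T) := by
    have h : Tendsto (fun n : ℕ => T - a n) atTop (nhds (T - 0)) :=
      tendsto_const_nhds.sub ha_tend
    rw [sub_zero] at h
    exact h
  have hFa_seq : Tendsto (fun n => F (a n)) atTop
      (nhds ((1 / Real.sqrt (2 * π)) * (-(Real.sqrt (2 * π) / 2)) +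
        ((β - α) / ((α + β) * Real.sqrt (2 * π)) * Real.exp (2 * α * β / T)) *
          (-(Real.sqrt (2 * π) / 2)))) := by
    refine hF0.comp (tendsto_nhdsWithin_iff.mpr ⟨ha_tend, ?_⟩)
    exact Eventually.of_forall fun n => h_an_pos n
  have hFb_seq : Tendsto (fun n => F (b n)) atTop
      (nhds ((1 / Real.sqrt (2 * π)) * (Real.sqrt (2 * π) / 2) +
        ((β - α) / ((α + β) * Real.sqrt (2 * π)) * Real.exp (2 * α * β / T)) *
          (-(Real.sqrt (2 * π) / 2)))) := by
    refine hFT.comp (tendsto_nhdsWithin_iff.mpr ⟨hb_tend, ?_⟩)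
    exact Eventually.of_forall fun n => h_bn_lt n
  set la : ℝ := (1 / Real.sqrt (2 * π)) * (-(Real.sqrt (2 * π) / 2)) +
      ((β - α) / ((α + β) * Real.sqrt (2 * π)) * Real.exp (2 * α * β / T)) *
        (-(Real.sqrt (2 * π) / 2)) with hla
  set lb : ℝ := (1 / Real.sqrt (2 * π)) * (Real.sqrt (2 * π) / 2) +
      ((β - α) / ((α + β) * Real.sqrt (2 * π)) * Real.exp (2 * α * β / T)) *
        (-(Real.sqrt (2 * π) / 2)) with hlb
  -- integrability of f on each Ioc (a n) (b n)
  have hfi : ∀ n : ℕ, IntegrableOn f (Ioc (a n) (b n)) := by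
    intro n
    have hconOn : ContinuousOn f (Icc (a n) (b n)) := fun x hx =>
      (hf_cont x (h_sub n hx)).continuousWithinAt
    exact (hconOn.integrableOn_Icc).mono_set Ioc_subset_Icc_self
  have hII : ∀ n : ℕ, IntervalIntegrable f volume (a n) (b n) := by
    intro n
    rw [intervalIntegrable_iff_integrableOn_Ioc_of_le (h_ab n).le]
    exact hfi n
  -- uniform bound on the truncated integrals
  have hev1 : ∀ᶠ n : ℕ in atTop, F (a n) ∈ Ioo (la - 1) (la + 1) :=
    hFa_seq (Ioo_mem_nhds (by linarith) (by linarith))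
  have hev2 : ∀ᶠ n : ℕ in atTop, F (b n) ∈ Ioo (lb - 1) (lb + 1) :=
    hFb_seq (Ioo_mem_nhds (by linarith) (by linarith))
  have hbound : ∀ᶠ n : ℕ in atTop, (∫ x in Ioc (a n) (b n), ‖f x‖) ≤ (lb + 1) - (la - 1) := by
    filter_upwards [hev1, hev2] with n h1 h2
    have heqnorm : (∫ x in Ioc (a n) (b n), ‖f x‖) = ∫ x in Ioc (a n) (b n), f x := by
      refine setIntegral_congr_fun measurableSet_Ioc fun x hx => ?_
      exact norm_of_nonneg (hf_nonneg x (h_sub n (Ioc_subset_Icc_self hx)))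
    have hFTC : (∫ x in (a n)..(b n), f x) = F (b n) - F (a n) := by
      refine intervalIntegral.integral_eq_sub_of_hasDerivAt (fun x hx => ?_) (hII n)
      refine hFd x (h_sub n ?_)
      rwa [uIcc_of_le (h_ab n).le] at hx
    rw [heqnorm, ← intervalIntegral.integral_of_le (h_ab n).le, hFTC]
    have := h1.1; have := h1.2; have := h2.1; have := h2.2
    linarith
  have hIoc : IntegrableOn f (Ioc (0:ℝ) T) :=
    integrableOn_Ioc_of_intervalIntegral_norm_bounded hfi ha_tend hb_tend hbound
  have hInt : IntervalIntegrable f volume 0 T := by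
    rw [intervalIntegrable_iff_integrableOn_Ioc_of_le hT.le]
    exact hIoc
  have hmain := intervalIntegral.integral_eq_sub_of_hasDerivAt_of_tendsto hT hFd hInt hF0 hFT
  rw [hf_def] at hmain
  rw [hmain, hla, hlb]
  field_simp
  ring

/-- The conditional density of the location of the maximum of a Brownian bridge on
[0,T] from a to b with volatility σ, given that the maximum equals M, integrates
to one over (0,T). -/
theorem brownian_bridge_argmax_density_integrates_to_one
    (T σ a b M : ℝ) (hT : 0 < T) (hσ : 0 < σ) (hMa : a < M) (hMb : b < M) :
    ∫ θ in (0 : ℝ)..T,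
      1 / (Real.sqrt (2 * π) * σ) * ((M - a) * (M - b) / (2 * M - a - b)) *
        (T / (θ * (T - θ))) ^ ((3 : ℝ) / 2) *
        Real.exp ((1 / σ ^ 2) * ((b - a) ^ 2 / (2 * T) + 2 * (M - a) * (M - b) / T
          - (M - a) ^ 2 / (2 * θ) - (M - b) ^ 2 / (2 * (T - θ)))) = 1 := by
  have hα : 0 < (M - a) / σ := div_pos (by linarith) hσ
  have hβ : 0 < (M - b) / σ := div_pos (by linarith) hσ
  have key := bb_key T ((M - a) / σ) ((M - b) / σ) hT hα hβ
  have hfeq : (fun θ : ℝ =>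
      1 / (Real.sqrt (2 * π) * σ) * ((M - a) * (M - b) / (2 * M - a - b)) *
        (T / (θ * (T - θ))) ^ ((3 : ℝ) / 2) *
        Real.exp ((1 / σ ^ 2) * ((b - a) ^ 2 / (2 * T) + 2 * (M - a) * (M - b) / T
          - (M - a) ^ 2 / (2 * θ) - (M - b) ^ 2 / (2 * (T - θ)))))
      = (fun θ : ℝ =>
      (M - a) / σ * ((M - b) / σ) / (Real.sqrt (2 * π) * ((M - a) / σ + (M - b) / σ)) *
        (T / (θ * (T - θ))) ^ ((3:ℝ)/2) *
        Real.exp (((M - a) / σ + (M - b) / σ) ^ 2 / (2 * T) - ((M - a) / σ) ^ 2 / (2 * θ)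
          - ((M - b) / σ) ^ 2 / (2 * (T - θ)))) := by
    funext θ
    have hc : 1 / (Real.sqrt (2 * π) * σ) * ((M - a) * (M - b) / (2 * M - a - b))
        = (M - a) / σ * ((M - b) / σ) / (Real.sqrt (2 * π) * ((M - a) / σ + (M - b) / σ)) := by
      have hsπ : Real.sqrt (2 * π) ≠ 0 := ne_of_gt (Real.sqrt_pos.mpr (by positivity))
      have hab : (2:ℝ) * M - a - b ≠ 0 := by nlinarith
      have h2 : (M - a) / σ + (M - b) / σ = (2 * M - a - b) / σ := by ring
      rw [h2]
      field_simp
    have he : (1 / σ ^ 2) * ((b - a) ^ 2 / (2 * T) + 2 * (M - a) * (M - b) / T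
          - (M - a) ^ 2 / (2 * θ) - (M - b) ^ 2 / (2 * (T - θ)))
        = ((M - a) / σ + (M - b) / σ) ^ 2 / (2 * T) - ((M - a) / σ) ^ 2 / (2 * θ)
          - ((M - b) / σ) ^ 2 / (2 * (T - θ)) := by
      ring
    rw [hc, he]
  rw [hfeq]
  exact key
end

section
/- Let T > 0 and let a, b, m be real numbers with m < a and m < b. Then ∫₀^T ((a-m)(b-m)·√(2T) / √(π·θ³·(T-θ)³)) · exp( (a-b)²/(2T) − (a-m)²/(2θ) − (b-m)²/(2(T-θ)) ) dθ = (2/T)·(a+b-2m)·exp(−2(a-m)(b-m)/T). -/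
open Real

open MeasureTheory Filter Set Topology


noncomputable def BBgg (T x : ℝ) : ℝ := ∫ t in (0:ℝ)..x, Real.exp (-(1/(2*T)) * t ^ 2)

lemma BBgg_cont (T : ℝ) : Continuous fun t : ℝ => Real.exp (-(1/(2*T)) * t ^ 2) := by
  continuity

lemma BBgg_hasDerivAt (T x : ℝ) :
    HasDerivAt (BBgg T) (Real.exp (-(1/(2*T)) * x ^ 2)) x := by
  have hc := BBgg_cont T
  exact intervalIntegral.integral_hasDerivAt_right (hc.intervalIntegrable 0 x)
    (hc.stronglyMeasurable.stronglyMeasurableAtFilter) hc.continuousAt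

lemma BBgg_tendsto_atTop (T : ℝ) (hT : 0 < T) :
    Tendsto (BBgg T) atTop (𝓝 (Real.sqrt (π/(1/(2*T)))/2)) := by
  have hb : (0:ℝ) < 1/(2*T) := by positivity
  have hint : IntegrableOn (fun t : ℝ => Real.exp (-(1/(2*T)) * t ^ 2)) (Ioi 0) :=
    (integrable_exp_neg_mul_sq hb).integrableOn
  have h := intervalIntegral_tendsto_integral_Ioi (μ := volume) 0 hint tendsto_id
  rwa [integral_gaussian_Ioi] at h

lemma BBgg_tendsto_atBot (T : ℝ) (hT : 0 < T) :
    Tendsto (BBgg T) atBot (𝓝 (-(Real.sqrt (π/(1/(2*T)))/2))) := by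
  have hb : (0:ℝ) < 1/(2*T) := by positivity
  have hint : IntegrableOn (fun t : ℝ => Real.exp (-(1/(2*T)) * t ^ 2)) (Iic 0) :=
    (integrable_exp_neg_mul_sq hb).integrableOn
  have h := intervalIntegral_tendsto_integral_Iic (μ := volume) 0 hint tendsto_id
  have hsymm := integral_comp_neg_Ioi (0:ℝ) (fun t => Real.exp (-(1/(2*T)) * t ^ 2))
  simp only [neg_zero, neg_sq] at hsymm
  rw [← hsymm, integral_gaussian_Ioi] at h
  have heq : ∀ x : ℝ, BBgg T x = -∫ t in x..(0:ℝ), Real.exp (-(1/(2*T)) * t ^ 2) := by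
    intro x
    rw [BBgg, intervalIntegral.integral_symm]
  exact Tendsto.congr (fun x => (heq x).symm) h.neg
noncomputable def BBF (T α β θ : ℝ) : ℝ :=
  -(1/T) * Real.sqrt (2/(π*T)) *
    ((α+β) * Real.exp (-2*α*β/T) * BBgg T ((α*(T-θ) - β*θ)/Real.sqrt (θ*(T-θ)))
      + (β-α) * BBgg T ((α*(T-θ) + β*θ)/Real.sqrt (θ*(T-θ))))

lemma BBF_hasDerivAt (T α β : ℝ) (hT : 0 < T) (hα : 0 < α) (hβ : 0 < β) {θ : ℝ}
    (hθ : θ ∈ Ioo (0:ℝ) T) :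
    HasDerivAt (BBF T α β)
      (α * β * Real.sqrt (2*T) / Real.sqrt (π*θ^3*(T-θ)^3) *
        Real.exp ((α-β)^2/(2*T) - α^2/(2*θ) - β^2/(2*(T-θ)))) θ := by
  obtain ⟨h0, h2⟩ := hθ
  have h1 : 0 < T - θ := by linarith
  have hprod : 0 < θ * (T - θ) := by positivity
  set s := Real.sqrt (θ*(T-θ)) with hs_def
  have hs0 : 0 < s := Real.sqrt_pos.2 hprod
  have hs2 : s ^ 2 = θ * (T - θ) := Real.sq_sqrt hprod.le
  -- derivative of the sqrt of the quadratic
  have hq : HasDerivAt (fun x : ℝ => x * (T - x)) (T - 2*θ) θ := by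
    have h := (hasDerivAt_id θ).mul ((hasDerivAt_const θ T).sub (hasDerivAt_id θ))
    refine h.congr_deriv (Eq.symm ?_); simp only [id_eq, Pi.sub_apply]; ring_nf
  have hsd : HasDerivAt (fun x : ℝ => Real.sqrt (x*(T-x))) ((T - 2*θ)/(2*s)) θ := by
    have h := (Real.hasDerivAt_sqrt hprod.ne').comp θ hq
    refine h.congr_deriv (Eq.symm ?_)
    simp [hs_def]; ring
  -- derivatives of the numerators
  have hNu : HasDerivAt (fun x : ℝ => α*(T-x) - β*x) (-α - β) θ := by
    have h := (((hasDerivAt_const θ T).sub (hasDerivAt_id θ)).const_mul α).sub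
      ((hasDerivAt_id θ).const_mul β)
    refine h.congr_deriv (Eq.symm ?_); ring
  have hNw : HasDerivAt (fun x : ℝ => α*(T-x) + β*x) (-α + β) θ := by
    have h := (((hasDerivAt_const θ T).sub (hasDerivAt_id θ)).const_mul α).add
      ((hasDerivAt_id θ).const_mul β)
    refine h.congr_deriv (Eq.symm ?_); ring
  -- derivatives of U and W
  have hU : HasDerivAt (fun x : ℝ => (α*(T-x) - β*x)/Real.sqrt (x*(T-x)))
      (-(T*(α*(T-θ) + β*θ))/(2*s^3)) θ := by
    have h := hNu.div hsd hs0.ne'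
    refine h.congr_deriv (Eq.symm ?_)
    rw [div_eq_div_iff (by positivity) (by positivity)]
    have expand : ((-α - β) * s - (α*(T-θ) - β*θ) * ((T - 2*θ)/(2*s))) * (2*s^3)
        = (2*(-α-β)*(s^2) - (α*(T-θ) - β*θ)*(T-2*θ)) * s^2 := by
      field_simp
    rw [expand, hs2]; ring
  have hW : HasDerivAt (fun x : ℝ => (α*(T-x) + β*x)/Real.sqrt (x*(T-x)))
      (-(T*(α*(T-θ) - β*θ))/(2*s^3)) θ := by
    have h := hNw.div hsd hs0.ne'
    refine h.congr_deriv (Eq.symm ?_)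
    rw [div_eq_div_iff (by positivity) (by positivity)]
    have expand : ((-α + β) * s - (α*(T-θ) + β*θ) * ((T - 2*θ)/(2*s))) * (2*s^3)
        = (2*(-α+β)*(s^2) - (α*(T-θ) + β*θ)*(T-2*θ)) * s^2 := by
      field_simp
    rw [expand, hs2]; ring
  -- compose with BBgg
  have hgU := (BBgg_hasDerivAt T ((α*(T-θ) - β*θ)/s)).comp θ hU
  have hgW := (BBgg_hasDerivAt T ((α*(T-θ) + β*θ)/s)).comp θ hW
  -- assemble F
  have hF : HasDerivAt (BBF T α β)
      (-(1/T) * Real.sqrt (2/(π*T)) *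
        ((α+β) * Real.exp (-2*α*β/T) *
            (Real.exp (-(1/(2*T)) * ((α*(T-θ) - β*θ)/s) ^ 2) * (-(T*(α*(T-θ) + β*θ))/(2*s^3)))
          + (β-α) *
            (Real.exp (-(1/(2*T)) * ((α*(T-θ) + β*θ)/s) ^ 2) * (-(T*(α*(T-θ) - β*θ))/(2*s^3))))) θ := by
    exact (((hgU.const_mul ((α+β) * Real.exp (-2*α*β/T))).add
      (hgW.const_mul (β-α))).const_mul (-(1/T) * Real.sqrt (2/(π*T))))
  convert hF using 1
  have hπ : (0:ℝ) < π := Real.pi_pos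
  have hexpU : Real.exp (-(1/(2*T)) * ((α*(T-θ) - β*θ)/s) ^ 2)
      = Real.exp ((α-β)^2/(2*T) - α^2/(2*θ) - β^2/(2*(T-θ))) * Real.exp (2*α*β/T) := by
    rw [← Real.exp_add]
    congr 1
    rw [div_pow, hs2]
    field_simp
    ring
  have hexpW : Real.exp (-(1/(2*T)) * ((α*(T-θ) + β*θ)/s) ^ 2)
      = Real.exp ((α-β)^2/(2*T) - α^2/(2*θ) - β^2/(2*(T-θ))) := by
    congr 1
    rw [div_pow, hs2]
    field_simp
    ring
  have hsqrtden : Real.sqrt (π*θ^3*(T-θ)^3) = Real.sqrt π * s^3 := by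
    have h3 : π*θ^3*(T-θ)^3 = π * (θ*(T-θ))^2 * (θ*(T-θ)) := by ring
    rw [h3, Real.sqrt_mul (by positivity), Real.sqrt_mul (by positivity : (0:ℝ) ≤ π) ((θ*(T-θ))^2),
      Real.sqrt_sq hprod.le, ← hs_def, ← hs2]
    ring
  have hconst2 : Real.sqrt (2/(π*T)) = Real.sqrt (2*T)/(Real.sqrt π * T) := by
    rw [show (2*T:ℝ) = 2/(π*T) * π * T^2 by field_simp, Real.sqrt_mul (by positivity),
      Real.sqrt_mul (by positivity : (0:ℝ) ≤ 2/(π*T)) π, Real.sqrt_sq hT.le]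
    rw [eq_div_iff (by positivity)]
    ring
  have hneg : Real.exp (-2*α*β/T) = (Real.exp (2*α*β/T))⁻¹ := by
    rw [← Real.exp_neg]
    ring_nf
  rw [hexpU, hexpW, hsqrtden, hconst2, hneg]
  have he1 : Real.exp (2*α*β/T) ≠ 0 := Real.exp_ne_zero _
  have hsπ : Real.sqrt π ≠ 0 := by positivity
  field_simp
  ring
lemma BBs_tendsto_zero (T : ℝ) (hT : 0 < T) :
    Tendsto (fun θ : ℝ => Real.sqrt (θ*(T-θ))) (𝓝[>] 0) (𝓝[>] 0) := by
  rw [tendsto_nhdsWithin_iff]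
  constructor
  · have hc : Continuous fun θ : ℝ => Real.sqrt (θ*(T-θ)) := by continuity
    have := hc.continuousAt (x := (0:ℝ))
    have h0 : Real.sqrt (0*(T-0)) = 0 := by simp
    simpa [h0] using this.tendsto.mono_left (nhdsWithin_le_nhds (s := Set.Ioi (0:ℝ)))
  · filter_upwards [Ioo_mem_nhdsGT_of_mem (Set.left_mem_Ico.2 hT)] with x hx
    have : 0 < x * (T - x) := mul_pos hx.1 (by linarith [hx.2])
    exact Real.sqrt_pos.2 this

lemma BBs_tendsto_T (T : ℝ) (hT : 0 < T) :
    Tendsto (fun θ : ℝ => Real.sqrt (θ*(T-θ))) (𝓝[<] T) (𝓝[>] 0) := by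
  rw [tendsto_nhdsWithin_iff]
  constructor
  · have hc : Continuous fun θ : ℝ => Real.sqrt (θ*(T-θ)) := by continuity
    have := hc.continuousAt (x := T)
    have h0 : Real.sqrt (T*(T-T)) = 0 := by simp
    simpa [h0] using this.tendsto.mono_left (nhdsWithin_le_nhds (s := Set.Iio T))
  · filter_upwards [Ioo_mem_nhdsLT_of_mem (Set.right_mem_Ioc.2 hT)] with x hx
    have : 0 < x * (T - x) := mul_pos hx.1 (by linarith [hx.2])
    exact Real.sqrt_pos.2 this

lemma BBF_tendsto_zero (T α β : ℝ) (hT : 0 < T) (hα : 0 < α) (hβ : 0 < β) :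
    Tendsto (BBF T α β) (𝓝[>] 0)
      (𝓝 (-(1/T) * Real.sqrt (2/(π*T)) *
        ((α+β) * Real.exp (-2*α*β/T) * (Real.sqrt (π/(1/(2*T)))/2)
          + (β-α) * (Real.sqrt (π/(1/(2*T)))/2)))) := by
  have hinv : Tendsto (fun θ : ℝ => (Real.sqrt (θ*(T-θ)))⁻¹) (𝓝[>] 0) atTop :=
    tendsto_inv_nhdsGT_zero.comp (BBs_tendsto_zero T hT)
  have hNu : Tendsto (fun θ : ℝ => α*(T-θ) - β*θ) (𝓝[>] 0) (𝓝 (α*T)) := by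
    have hc : Continuous fun θ : ℝ => α*(T-θ) - β*θ := by continuity
    have := (hc.continuousAt (x := (0:ℝ))).tendsto.mono_left (nhdsWithin_le_nhds (s := Set.Ioi (0:ℝ)))
    simpa using this
  have hNw : Tendsto (fun θ : ℝ => α*(T-θ) + β*θ) (𝓝[>] 0) (𝓝 (α*T)) := by
    have hc : Continuous fun θ : ℝ => α*(T-θ) + β*θ := by continuity
    have := (hc.continuousAt (x := (0:ℝ))).tendsto.mono_left (nhdsWithin_le_nhds (s := Set.Ioi (0:ℝ)))
    simpa using this
  have hU : Tendsto (fun θ : ℝ => (α*(T-θ) - β*θ)/Real.sqrt (θ*(T-θ))) (𝓝[>] 0) atTop := by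
    simp only [div_eq_mul_inv]
    exact hNu.pos_mul_atTop (by positivity) hinv
  have hW : Tendsto (fun θ : ℝ => (α*(T-θ) + β*θ)/Real.sqrt (θ*(T-θ))) (𝓝[>] 0) atTop := by
    simp only [div_eq_mul_inv]
    exact hNw.pos_mul_atTop (by positivity) hinv
  have hgU := (BBgg_tendsto_atTop T hT).comp hU
  have hgW := (BBgg_tendsto_atTop T hT).comp hW
  exact ((hgU.const_mul ((α+β) * Real.exp (-2*α*β/T))).add
    (hgW.const_mul (β-α))).const_mul (-(1/T) * Real.sqrt (2/(π*T)))

lemma BBF_tendsto_T (T α β : ℝ) (hT : 0 < T) (hα : 0 < α) (hβ : 0 < β) :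
    Tendsto (BBF T α β) (𝓝[<] T)
      (𝓝 (-(1/T) * Real.sqrt (2/(π*T)) *
        ((α+β) * Real.exp (-2*α*β/T) * (-(Real.sqrt (π/(1/(2*T)))/2))
          + (β-α) * (Real.sqrt (π/(1/(2*T)))/2)))) := by
  have hinv : Tendsto (fun θ : ℝ => (Real.sqrt (θ*(T-θ)))⁻¹) (𝓝[<] T) atTop :=
    tendsto_inv_nhdsGT_zero.comp (BBs_tendsto_T T hT)
  have hNu : Tendsto (fun θ : ℝ => α*(T-θ) - β*θ) (𝓝[<] T) (𝓝 (-(β*T))) := by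
    have hc : Continuous fun θ : ℝ => α*(T-θ) - β*θ := by continuity
    have := (hc.continuousAt (x := T)).tendsto.mono_left (nhdsWithin_le_nhds (s := Set.Iio T))
    simpa using this
  have hNw : Tendsto (fun θ : ℝ => α*(T-θ) + β*θ) (𝓝[<] T) (𝓝 (β*T)) := by
    have hc : Continuous fun θ : ℝ => α*(T-θ) + β*θ := by continuity
    have := (hc.continuousAt (x := T)).tendsto.mono_left (nhdsWithin_le_nhds (s := Set.Iio T))
    simpa using this
  have hU : Tendsto (fun θ : ℝ => (α*(T-θ) - β*θ)/Real.sqrt (θ*(T-θ))) (𝓝[<] T) atBot := by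
    simp only [div_eq_mul_inv]
    exact hNu.neg_mul_atTop (by nlinarith) hinv
  have hW : Tendsto (fun θ : ℝ => (α*(T-θ) + β*θ)/Real.sqrt (θ*(T-θ))) (𝓝[<] T) atTop := by
    simp only [div_eq_mul_inv]
    exact hNw.pos_mul_atTop (by positivity) hinv
  have hgU := (BBgg_tendsto_atBot T hT).comp hU
  have hgW := (BBgg_tendsto_atTop T hT).comp hW
  exact ((hgU.const_mul ((α+β) * Real.exp (-2*α*β/T))).add
    (hgW.const_mul (β-α))).const_mul (-(1/T) * Real.sqrt (2/(π*T)))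
lemma BBsqrtden (T θ : ℝ) (h0 : 0 < θ) (h1 : θ < T) :
    Real.sqrt (π*θ^3*(T-θ)^3) = Real.sqrt π * (Real.sqrt (θ*(T-θ)))^3 := by
  have hprod : 0 < θ * (T - θ) := by nlinarith
  have h3 : π*θ^3*(T-θ)^3 = π * (θ*(T-θ))^2 * (θ*(T-θ)) := by ring
  rw [h3, Real.sqrt_mul (by positivity), Real.sqrt_mul (by positivity : (0:ℝ) ≤ π) ((θ*(T-θ))^2),
    Real.sqrt_sq hprod.le]
  rw [show (Real.sqrt (θ*(T-θ)))^3 = (Real.sqrt (θ*(T-θ)))^2 * Real.sqrt (θ*(T-θ)) from by ring,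
    Real.sq_sqrt hprod.le]
  ring

lemma BBexp_bound {c θ : ℝ} (hc : 0 < c) (hθ : 0 < θ) :
    Real.exp (-(c^2/(2*θ))) ≤ 8*θ^2/c^4 := by
  have hx : 0 ≤ c^2/(2*θ) := by positivity
  have h := Real.quadratic_le_exp_of_nonneg hx
  have h2 : c^4/(8*θ^2) ≤ Real.exp (c^2/(2*θ)) := by
    have : c^4/(8*θ^2) = (c^2/(2*θ))^2/2 := by
      field_simp
      ring
    rw [this]
    nlinarith [hx]
  rw [Real.exp_neg]
  have h3 := inv_anti₀ (by positivity : (0:ℝ) < c^4/(8*θ^2)) h2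
  rwa [inv_div] at h3

lemma BBintegrable (T α β : ℝ) (hT : 0 < T) (hα : 0 < α) (hβ : 0 < β) :
    IntervalIntegrable (fun θ : ℝ =>
      α * β * Real.sqrt (2*T) / Real.sqrt (π*θ^3*(T-θ)^3) *
        Real.exp ((α-β)^2/(2*T) - α^2/(2*θ) - β^2/(2*(T-θ)))) MeasureTheory.volume 0 T := by
  rw [intervalIntegrable_iff_integrableOn_Ioc_of_le hT.le,
    integrableOn_Ioc_iff_integrableOn_Ioo]
  have hcont : ContinuousOn (fun θ : ℝ =>
      α * β * Real.sqrt (2*T) / Real.sqrt (π*θ^3*(T-θ)^3) *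
        Real.exp ((α-β)^2/(2*T) - α^2/(2*θ) - β^2/(2*(T-θ)))) (Ioo 0 T) := by
    apply ContinuousOn.mul
    · apply ContinuousOn.div continuousOn_const
      · exact (Real.continuous_sqrt.comp (by continuity)).continuousOn
      · intro x hx
        have hx2 : 0 < T - x := by linarith [hx.2]
        exact ne_of_gt (Real.sqrt_pos.2
          (mul_pos (mul_pos Real.pi_pos (pow_pos hx.1 3)) (pow_pos hx2 3)))
    · apply Real.continuous_exp.comp_continuousOn
      apply ContinuousOn.sub
      · apply ContinuousOn.sub continuousOn_const
        exact ContinuousOn.div continuousOn_const (by fun_prop)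
          (fun x hx => ne_of_gt (by linarith [hx.1] : (0:ℝ) < 2*x))
      · exact ContinuousOn.div continuousOn_const (by fun_prop)
          (fun x hx => ne_of_gt (by linarith [hx.2] : (0:ℝ) < 2*(T-x)))
  refine ⟨hcont.aestronglyMeasurable measurableSet_Ioo, ?_⟩
  apply MeasureTheory.HasFiniteIntegral.restrict_of_bounded
    (C := α*β*Real.sqrt (2*T)*Real.exp ((α-β)^2/(2*T)) * (64/(α^4*β^4)) * T / Real.sqrt π)
  · exact measure_Ioo_lt_top
  · filter_upwards [MeasureTheory.ae_restrict_mem measurableSet_Ioo] with θ hθ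
    obtain ⟨h0, h2⟩ := hθ
    have h1 : 0 < T - θ := by linarith
    have hprod : 0 < θ * (T-θ) := by positivity
    set s := Real.sqrt (θ*(T-θ)) with hs_def
    have hs0 : 0 < s := Real.sqrt_pos.2 hprod
    have hs2 : s^2 = θ*(T-θ) := Real.sq_sqrt hprod.le
    have hπ := Real.pi_pos
    rw [Real.norm_eq_abs, abs_of_nonneg (by positivity)]
    have hsplit : Real.exp ((α-β)^2/(2*T) - α^2/(2*θ) - β^2/(2*(T-θ)))
        = Real.exp ((α-β)^2/(2*T)) * Real.exp (-(α^2/(2*θ))) * Real.exp (-(β^2/(2*(T-θ)))) := by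
      rw [← Real.exp_add, ← Real.exp_add]
      congr 1 <;> ring
    rw [hsplit, BBsqrtden T θ h0 h2, ← hs_def]
    have hbU : Real.exp (-(α^2/(2*θ))) ≤ 8*θ^2/α^4 := BBexp_bound hα h0
    have hbW : Real.exp (-(β^2/(2*(T-θ)))) ≤ 8*(T-θ)^2/β^4 := BBexp_bound hβ h1
    calc α * β * Real.sqrt (2*T) / (Real.sqrt π * s^3) *
          (Real.exp ((α-β)^2/(2*T)) * Real.exp (-(α^2/(2*θ))) * Real.exp (-(β^2/(2*(T-θ)))))
        ≤ α * β * Real.sqrt (2*T) / (Real.sqrt π * s^3) *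
          (Real.exp ((α-β)^2/(2*T)) * (8*θ^2/α^4) * (8*(T-θ)^2/β^4)) := by
          gcongr <;> first | exact hbU | exact hbW
      _ = α*β*Real.sqrt (2*T)*Real.exp ((α-β)^2/(2*T)) * (64/(α^4*β^4)) / Real.sqrt π * s := by
          have hθ2 : θ^2*(T-θ)^2 = s^4 := by
            rw [show s^4 = (s^2)^2 from by ring, hs2]
            ring
          field_simp
          linear_combination 64 * hθ2
      _ ≤ α*β*Real.sqrt (2*T)*Real.exp ((α-β)^2/(2*T)) * (64/(α^4*β^4)) / Real.sqrt π * T := by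
          apply mul_le_mul_of_nonneg_left _ (by positivity)
          rw [hs_def]
          calc Real.sqrt (θ*(T-θ)) ≤ Real.sqrt (T*T) := Real.sqrt_le_sqrt (by nlinarith)
            _ = T := Real.sqrt_mul_self hT.le
      _ = α*β*Real.sqrt (2*T)*Real.exp ((α-β)^2/(2*T)) * (64/(α^4*β^4)) * T / Real.sqrt π := by
          ring
lemma BB_key (T α β : ℝ) (hT : 0 < T) (hα : 0 < α) (hβ : 0 < β) :
    ∫ θ in (0:ℝ)..T, α * β * Real.sqrt (2*T) / Real.sqrt (π*θ^3*(T-θ)^3) *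
      Real.exp ((α-β)^2/(2*T) - α^2/(2*θ) - β^2/(2*(T-θ)))
      = 2/T*(α+β)*Real.exp (-2*α*β/T) := by
  rw [intervalIntegral.integral_eq_sub_of_hasDerivAt_of_tendsto hT
    (fun θ hθ => BBF_hasDerivAt T α β hT hα hβ hθ) (BBintegrable T α β hT hα hβ)
    (BBF_tendsto_zero T α β hT hα hβ) (BBF_tendsto_T T α β hT hα hβ)]
  have hπ := Real.pi_pos
  have hS : Real.sqrt (2/(π*T)) * (Real.sqrt (π/(1/(2*T)))/2) = 1 := by
    have hS2 : Real.sqrt (2/(π*T)) * Real.sqrt (π/(1/(2*T))) = 2 := by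
      rw [← Real.sqrt_mul (by positivity), show 2/(π*T) * (π/(1/(2*T))) = 4 by field_simp; ring,
        show (4:ℝ) = 2^2 by norm_num, Real.sqrt_sq (by norm_num)]
    rw [← mul_div_assoc, hS2]
    norm_num
  linear_combination ((2/T)*(α+β)*Real.exp (-2*α*β/T)) * hS

/-- Integrating the joint density of the minimum of a Brownian bridge and its
location over the location θ ∈ (0,T) recovers the marginal density of the minimum. -/
theorem brownian_bridge_joint_min_density_marginalizes
    (T a b m : ℝ) (hT : 0 < T) (hma : m < a) (hmb : m < b) :
    ∫ θ in (0 : ℝ)..T,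
      (a - m) * (b - m) * Real.sqrt (2 * T) / Real.sqrt (π * θ ^ 3 * (T - θ) ^ 3) *
        Real.exp ((a - b) ^ 2 / (2 * T) - (a - m) ^ 2 / (2 * θ)
          - (b - m) ^ 2 / (2 * (T - θ))) =
    2 / T * (a + b - 2 * m) * Real.exp (-2 * (a - m) * (b - m) / T) := by
  have h1 : a - b = (a-m) - (b-m) := by ring
  have h2 : a + b - 2*m = (a-m) + (b-m) := by ring
  rw [h1, h2]
  exact BB_key T (a-m) (b-m) hT (by linarith) (by linarith)
end
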